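/- Let M be a maximum matching of a bipartite graph G with Dulmage–Mendelsohn classes E, O, U. Then G contains no edge joining two even vertices and no edge joining an even vertex to an unreachable vertex. -/

import Mathlib

open SimpleGraph

/-- Edges of a list alternate w.r.t. membership in `S`; the flag records whether
the next edge must belong to `S`. -/
def altEdges {V : Type*} (S : Set (Sym2 V)) : Bool → List (Sym2 V) → Prop
  | _, [] => True
  | flag, e :: rest => (e ∈ S ↔ flag = true) ∧ altEdges S (!flag) rest

/-- `v` is reachable from some `M`-unmatched vertex by an alternating path
(starting with a non-matching edge) of even length. -/
def EvenVtx {V : Type*} (G : SimpleGraph V) (M : G.Subgraph) (v : V) : Prop :=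
  ∃ u, u ∉ M.verts ∧ ∃ p : G.Walk u v,
    p.IsPath ∧ altEdges M.edgeSet false p.edges ∧ Even p.length

/-- `v` is reachable from some `M`-unmatched vertex by an alternating path of
odd length. -/
def OddVtx {V : Type*} (G : SimpleGraph V) (M : G.Subgraph) (v : V) : Prop :=
  ∃ u, u ∉ M.verts ∧ ∃ p : G.Walk u v,
    p.IsPath ∧ altEdges M.edgeSet false p.edges ∧ Odd p.length

/-- `v` is not reachable from any `M`-unmatched vertex by an alternating path. -/
def UnreachableVtx {V : Type*} (G : SimpleGraph V) (M : G.Subgraph) (v : V) : Prop :=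
  ∀ u (p : G.Walk u v), u ∉ M.verts → p.IsPath →
    altEdges M.edgeSet false p.edges → False

theorem altEdges_iff {V : Type*} (S : Set (Sym2 V)) (b : Bool) (l : List (Sym2 V)) :
    altEdges S b l ↔ ∀ i (h : i < l.length), (l[i] ∈ S ↔ (Even i ↔ b = true)) := by
  induction l generalizing b with
  | nil => simp [altEdges]
  | cons e rest ih =>
    simp only [altEdges, ih]
    constructor
    · rintro ⟨h0, hrest⟩ i hi
      match i with
      | 0 => simpa using h0
      | (i+1) =>
        have := hrest i (by simpa using hi)
        rw [List.getElem_cons_succ, this]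
        rcases b with _ | _ <;> simp [Nat.even_add_one] <;> tauto
    · intro h
      refine ⟨(h 0 (by simp)).trans (by simp), fun i hi => ?_⟩
      have := h (i+1) (by simpa using hi)
      rw [List.getElem_cons_succ] at this
      rw [this]
      rcases b with _ | _ <;> simp [Nat.even_add_one] <;> tauto

theorem altEdges_false_iff {V : Type*} (S : Set (Sym2 V)) (l : List (Sym2 V)) :
    altEdges S false l ↔ ∀ i (h : i < l.length), (l[i] ∈ S ↔ Odd i) := by
  rw [altEdges_iff]
  refine forall_congr' fun i => forall_congr' fun h => ?_
  simp only [Bool.false_eq_true, iff_false, Nat.not_even_iff_odd]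

theorem edges_getElem {V : Type*} {G : SimpleGraph V} {u v : V} (p : G.Walk u v) :
    ∀ (i : ℕ) (h : i < p.edges.length), p.edges[i] = s(p.getVert i, p.getVert (i+1)) := by
  induction p with
  | nil => simp
  | cons h q ih =>
    intro i hi
    match i with
    | 0 => simp [SimpleGraph.Walk.getVert]
    | (i+1) =>
      simp only [SimpleGraph.Walk.edges_cons, List.getElem_cons_succ,
        SimpleGraph.Walk.getVert_cons_succ]
      exact ih i (by simpa using hi)

theorem support_getElem {V : Type*} {G : SimpleGraph V} {u v : V} (p : G.Walk u v) :
    ∀ (i : ℕ) (h : i < p.support.length), p.support[i] = p.getVert i := by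
  induction p with
  | nil =>
    intro i hi
    simp only [SimpleGraph.Walk.support_nil, List.length_cons, List.length_nil] at hi
    interval_cases i <;> simp [SimpleGraph.Walk.getVert]
  | cons h q ih =>
    intro i hi
    match i with
    | 0 => simp [SimpleGraph.Walk.getVert]
    | (i+1) =>
      simp only [SimpleGraph.Walk.support_cons, List.getElem_cons_succ,
        SimpleGraph.Walk.getVert_cons_succ]
      exact ih i (by simpa using hi)

theorem getVert_injOn {V : Type*} {G : SimpleGraph V} {u v : V} {p : G.Walk u v}
    (hp : p.IsPath) {i j : ℕ} (hi : i ≤ p.length) (hj : j ≤ p.length)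
    (h : p.getVert i = p.getVert j) : i = j := by
  have hs := hp.support_nodup
  have hl : p.support.length = p.length + 1 := SimpleGraph.Walk.length_support p
  have hi' : i < p.support.length := by omega
  have hj' : j < p.support.length := by omega
  have := List.Nodup.getElem_inj_iff hs (i := i) (j := j) (hi := hi') (hj := hj')
  rw [support_getElem p i hi', support_getElem p j hj'] at this
  exact this.mp h
theorem flip_aux {V : Type*} [Fintype V] {G : SimpleGraph V} {M : G.Subgraph}
    (hM : M.IsMatching)
    (hmax : ∀ N : G.Subgraph, N.IsMatching → N.verts.ncard ≤ M.verts.ncard)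
    {a b : V} (W : G.Walk a b) (hW : W.IsPath) (hodd : Odd W.length)
    (ha : a ∉ M.verts) (hb : b ∉ M.verts)
    (halt : ∀ i (h : i < W.edges.length), (W.edges[i] ∈ M.edgeSet ↔ Odd i)) : False := by
  classical
  set L := W.length with hLdef
  have hel : W.edges.length = L := W.length_edges
  have hL1 : 1 ≤ L := hodd.pos
  have hpos : ∀ {i j : ℕ}, i ≤ L → j ≤ L → W.getVert i = W.getVert j → i = j :=
    fun hi hj h => getVert_injOn hW hi hj h
  have hab : a ≠ b := by
    intro h
    have : W.getVert 0 = W.getVert L := by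
      rw [W.getVert_zero, SimpleGraph.Walk.getVert_length, h]
    exact absurd (hpos (by omega) le_rfl this) (by omega)
  -- membership of an edge in W.edges, by positions
  have hmem : ∀ {x y : V}, s(x, y) ∈ W.edges ↔ ∃ i < L,
      (x = W.getVert i ∧ y = W.getVert (i+1)) ∨ (y = W.getVert i ∧ x = W.getVert (i+1)) := by
    intro x y
    rw [List.mem_iff_getElem]
    constructor
    · rintro ⟨i, hi, hEq⟩
      rw [edges_getElem W i hi] at hEq
      rw [Sym2.eq_iff] at hEq
      exact ⟨i, by omega, by tauto⟩
    · rintro ⟨i, hi, hor⟩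
      refine ⟨i, by omega, ?_⟩
      rw [edges_getElem W i (by omega), Sym2.eq_iff]
      tauto
  have hedge : ∀ i, i < L → (M.Adj (W.getVert i) (W.getVert (i+1)) ↔ Odd i) := by
    intro i hi
    have := halt i (by omega)
    rw [edges_getElem W i (by omega)] at this
    rwa [SimpleGraph.Subgraph.mem_edgeSet] at this
  -- every vertex of W is in M.verts ∪ {a, b}
  have hsupp : ∀ k ≤ L, W.getVert k ∈ M.verts ∪ {a, b} := by
    intro k hk
    rcases Nat.eq_zero_or_pos k with rfl | hk0
    · right; simp [W.getVert_zero]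
    rcases eq_or_lt_of_le hk with rfl | hkL
    · have hgb : W.getVert L = b := by rw [hLdef]; exact SimpleGraph.Walk.getVert_length W
      right; rw [hgb]; simp
    rcases Nat.even_or_odd k with he | ho
    · have hodd' : Odd (k - 1) := by
        rw [Nat.odd_iff]; rw [Nat.even_iff] at he; omega
      have := (hedge (k-1) (by omega)).mpr hodd'
      have h2 : k - 1 + 1 = k := by omega
      rw [h2] at this
      exact Or.inl (M.edge_vert this.symm)
    · exact Or.inl (M.edge_vert ((hedge k hkL).mpr ho))
  -- the flipped subgraph
  set N : G.Subgraph :=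
    { verts := M.verts ∪ {a, b}
      Adj := fun x y => (M.Adj x y ∧ s(x, y) ∉ W.edges) ∨ (s(x, y) ∈ W.edges ∧ ¬ M.Adj x y)
      adj_sub := by
        rintro x y (⟨h, -⟩ | ⟨h, -⟩)
        · exact M.adj_sub h
        · exact (SimpleGraph.Walk.edges_subset_edgeSet W h)
      edge_vert := by
        rintro x y (⟨h, -⟩ | ⟨h, -⟩)
        · exact Or.inl (M.edge_vert h)
        · obtain ⟨i, hi, hor⟩ := hmem.mp h
          rcases hor with ⟨hx, -⟩ | ⟨-, hx⟩
          · exact hx ▸ hsupp i (by omega)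
          · exact hx ▸ hsupp (i+1) (by omega)
      symm := by
        constructor; rintro x y (⟨h, h2⟩ | ⟨h, h2⟩)
        · exact Or.inl ⟨h.symm, by rwa [Sym2.eq_swap]⟩
        · exact Or.inr ⟨by rwa [Sym2.eq_swap], fun hc => h2 hc.symm⟩ } with hNdef
  have hNverts : N.verts = M.verts ∪ {a, b} := rfl
  have hNadj : ∀ x y, N.Adj x y ↔
      (M.Adj x y ∧ s(x, y) ∉ W.edges) ∨ (s(x, y) ∈ W.edges ∧ ¬ M.Adj x y) := fun _ _ => Iff.rfl
  have hN : N.IsMatching := by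
    intro x hx
    by_cases hxs : ∃ i ≤ L, W.getVert i = x
    · obtain ⟨i, hiL, rfl⟩ := hxs
      rcases Nat.eq_zero_or_pos i with rfl | hi0
      · -- x = a
        refine ⟨W.getVert 1, Or.inr ⟨?_, ?_⟩, ?_⟩
        · have := List.getElem_mem (l := W.edges) (n := 0) (h := by omega)
          rwa [edges_getElem W 0 (by omega)] at this
        · intro hMadj
          exact ha (M.edge_vert (by rwa [W.getVert_zero] at hMadj))
        · rintro z (⟨h1, -⟩ | ⟨h1, -⟩)
          · exact absurd (M.edge_vert (by rwa [W.getVert_zero] at h1)) ha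
          · obtain ⟨k, hk, hor⟩ := hmem.mp h1
            rcases hor with ⟨hx1, hz1⟩ | ⟨hz1, hx1⟩
            · have : k = 0 := hpos (by omega) (by omega) hx1.symm
              rw [hz1, this]
            · exact absurd (hpos (by omega) (by omega) hx1.symm) (by omega)
      rcases eq_or_lt_of_le hiL with rfl | hiL'
      · -- x = b  (i = L)
        refine ⟨W.getVert (L-1), Or.inr ⟨?_, ?_⟩, ?_⟩
        · have := List.getElem_mem (l := W.edges) (n := L-1) (h := by omega)
          rw [edges_getElem W (L-1) (by omega)] at this
          have h2 : L - 1 + 1 = L := by omega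
          rw [h2] at this
          rwa [Sym2.eq_swap] at this
        · intro hMadj
          exact hb (M.edge_vert (by rwa [SimpleGraph.Walk.getVert_length] at hMadj))
        · rintro z (⟨h1, -⟩ | ⟨h1, -⟩)
          · exact absurd (M.edge_vert (by rwa [SimpleGraph.Walk.getVert_length] at h1)) hb
          · obtain ⟨k, hk, hor⟩ := hmem.mp h1
            rcases hor with ⟨hx1, hz1⟩ | ⟨hz1, hx1⟩
            · exact absurd (hpos (by omega) (by omega) hx1.symm) (by omega)
            · have : k + 1 = L := hpos (by omega) (by omega) hx1.symm
              rw [hz1]; congr 1; omega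
      · -- interior vertex
        rcases Nat.even_or_odd i with hev | hod
        · -- matched backwards via edge i-1, flip partner is getVert (i+1)
          have hodd' : Odd (i-1) := by rw [Nat.odd_iff]; rw [Nat.even_iff] at hev; omega
          have hMadj : M.Adj (W.getVert i) (W.getVert (i-1)) := by
            have := (hedge (i-1) (by omega)).mpr hodd'
            have h2 : i - 1 + 1 = i := by omega
            rw [h2] at this; exact this.symm
          have huniq := hM (M.edge_vert hMadj)
          have hupartner : ∀ z, M.Adj (W.getVert i) z → z = W.getVert (i-1) :=
            fun z hz => huniq.unique hz hMadj
          refine ⟨W.getVert (i+1), Or.inr ⟨?_, ?_⟩, ?_⟩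
          · have := List.getElem_mem (l := W.edges) (n := i) (h := by omega)
            rwa [edges_getElem W i (by omega)] at this
          · intro hc
            have := hupartner _ hc
            exact absurd (hpos (by omega) (by omega) this) (by omega)
          · rintro z (⟨h1, h2⟩ | ⟨h1, h2⟩)
            · exfalso
              have hz := hupartner z h1
              subst hz
              apply h2
              have := List.getElem_mem (l := W.edges) (n := i-1) (h := by omega)
              rw [edges_getElem W (i-1) (by omega)] at this
              have h3 : i - 1 + 1 = i := by omega
              rw [h3] at this
              rwa [Sym2.eq_swap] at this
            · obtain ⟨k, hk, hor⟩ := hmem.mp h1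
              rcases hor with ⟨hx1, hz1⟩ | ⟨hz1, hx1⟩
              · have : k = i := hpos (by omega) (by omega) hx1.symm
                rw [hz1, this]
              · exfalso
                have : k + 1 = i := hpos (by omega) (by omega) hx1.symm
                apply h2
                rw [hz1]
                have := (hedge k (by omega)).mpr (by rw [Nat.odd_iff]; rw [Nat.even_iff] at hev; omega)
                rw [show k + 1 = i by omega] at this
                exact this.symm
        · -- i odd: matched forwards via edge i, flip partner is getVert (i-1)
          have hMadj : M.Adj (W.getVert i) (W.getVert (i+1)) := (hedge i (by omega)).mpr hod
          have huniq := hM (M.edge_vert hMadj)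
          have hupartner : ∀ z, M.Adj (W.getVert i) z → z = W.getVert (i+1) :=
            fun z hz => huniq.unique hz hMadj
          refine ⟨W.getVert (i-1), Or.inr ⟨?_, ?_⟩, ?_⟩
          · have := List.getElem_mem (l := W.edges) (n := i-1) (h := by omega)
            rw [edges_getElem W (i-1) (by omega)] at this
            have h3 : i - 1 + 1 = i := by omega
            rw [h3] at this
            rwa [Sym2.eq_swap] at this
          · intro hc
            have := hupartner _ hc
            exact absurd (hpos (by omega) (by omega) this) (by omega)
          · rintro z (⟨h1, h2⟩ | ⟨h1, h2⟩)
            · exfalso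
              have hz := hupartner z h1
              subst hz
              apply h2
              have := List.getElem_mem (l := W.edges) (n := i) (h := by omega)
              rwa [edges_getElem W i (by omega)] at this
            · obtain ⟨k, hk, hor⟩ := hmem.mp h1
              rcases hor with ⟨hx1, hz1⟩ | ⟨hz1, hx1⟩
              · exfalso
                have hki : k = i := hpos (by omega) (by omega) hx1.symm
                exact h2 (by rw [hz1, hki]; exact hMadj)
              · have : k + 1 = i := hpos (by omega) (by omega) hx1.symm
                rw [hz1]; congr 1; omega
    · -- x not on W
      push_neg at hxs
      have hxM : x ∈ M.verts := by
        rcases hx with h | h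
        · exact h
        · exfalso
          simp only [Set.mem_insert_iff, Set.mem_singleton_iff] at h
          rcases h with h | h
          · exact hxs 0 (by omega) (W.getVert_zero.trans h.symm)
          · refine hxs L le_rfl ?_
            have : W.getVert L = b := by rw [hLdef]; exact SimpleGraph.Walk.getVert_length W
            rw [this, h]
      obtain ⟨y, hy, hyu⟩ := hM hxM
      have hnotedge : ∀ z, s(x, z) ∉ W.edges := by
        intro z hc
        obtain ⟨k, hk, hor⟩ := hmem.mp hc
        rcases hor with ⟨hx1, -⟩ | ⟨-, hx1⟩
        · exact hxs k (by omega) hx1.symm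
        · exact hxs (k+1) (by omega) hx1.symm
      refine ⟨y, Or.inl ⟨hy, hnotedge y⟩, ?_⟩
      rintro z (⟨h1, -⟩ | ⟨h1, -⟩)
      · exact hyu z h1
      · exact absurd h1 (hnotedge z)
  -- cardinality contradiction
  have hdisj : Disjoint M.verts {a, b} := by
    rw [Set.disjoint_right]
    rintro x (rfl | rfl)
    · exact ha
    · exact hb
  have hcard : N.verts.ncard = M.verts.ncard + 2 := by
    rw [hNverts, Set.ncard_union_eq hdisj (Set.toFinite _) (Set.toFinite _),
      Set.ncard_pair hab]
  have := hmax N hN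
  omega
theorem side_end {V : Type*} {G : SimpleGraph V} (side : V → Bool)
    (hbip : ∀ u v, G.Adj u v → side u ≠ side v) :
    ∀ {s t : V} (w : G.Walk s t), (side t = side s ↔ Even w.length) := by
  intro s t w
  induction w with
  | nil => simp
  | @cons s m t h q ih =>
    have hne := hbip _ _ h
    rw [SimpleGraph.Walk.length_cons, Nat.even_add_one, ← ih]
    cases hst : side t <;> cases hss : side s <;> cases hsm : side m <;> simp_all

theorem edges_takeUntil_prefix {V : Type*} [DecidableEq V] {G : SimpleGraph V} {u v y : V}
    (p : G.Walk u v) (h : y ∈ p.support) :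
    p.edges = (p.takeUntil y h).edges ++ (p.dropUntil y h).edges := by
  rw [← SimpleGraph.Walk.edges_append, SimpleGraph.Walk.take_spec]

theorem alt_takeUntil {V : Type*} [DecidableEq V] {G : SimpleGraph V} {S : Set (Sym2 V)}
    {u v y : V} (p : G.Walk u v) (h : y ∈ p.support)
    (halt : ∀ i (hi : i < p.edges.length), (p.edges[i] ∈ S ↔ Odd i)) :
    ∀ i (hi : i < (p.takeUntil y h).edges.length), ((p.takeUntil y h).edges[i] ∈ S ↔ Odd i) := by
  intro i hi
  have hl := edges_takeUntil_prefix p h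
  have hlen : p.edges.length =
      (p.takeUntil y h).edges.length + (p.dropUntil y h).edges.length := by
    rw [hl, List.length_append]
  have heq : p.edges[i]'(by omega) = (p.takeUntil y h).edges[i] := by
    rw [List.getElem_of_eq hl (by omega), List.getElem_append_left hi]
  rw [← heq]
  exact halt i (by omega)

theorem cross {V : Type*} [Fintype V] {G : SimpleGraph V} (side : V → Bool)
    (hbip : ∀ u v, G.Adj u v → side u ≠ side v) {M : G.Subgraph} (hM : M.IsMatching)
    (hmax : ∀ N : G.Subgraph, N.IsMatching → N.verts.ncard ≤ M.verts.ncard) :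
    ∀ (n : ℕ) {b y : V} (q : G.Walk b y), q.length = n → q.IsPath → b ∉ M.verts →
      (∀ i (hi : i < q.edges.length), (q.edges[i] ∈ M.edgeSet ↔ Odd i)) →
      ∀ {a u : V} (p : G.Walk a u), p.IsPath → a ∉ M.verts →
      (∀ i (hi : i < p.edges.length), (p.edges[i] ∈ M.edgeSet ↔ Odd i)) →
      side a ≠ side b → y ∈ p.support → False := by
  classical
  intro n
  induction n using Nat.strong_induction_on with
  | _ n ih =>
  intro b y q hqn hq hb haltq a u p hp ha haltp hside hy
  by_cases hzz : ∃ z ∈ q.support, z ≠ y ∧ z ∈ p.support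
  · obtain ⟨z, hzq, hzy, hzp⟩ := hzz
    have hq' : (q.takeUntil z hzq).IsPath := hq.takeUntil hzq
    have hlt : (q.takeUntil z hzq).length < q.length := by
      have hlen : (q.takeUntil z hzq).length + (q.dropUntil z hzq).length = q.length := by
        rw [← SimpleGraph.Walk.length_append, SimpleGraph.Walk.take_spec]
      have hne : (q.dropUntil z hzq).length ≠ 0 :=
        fun h0 => hzy (SimpleGraph.Walk.eq_of_length_eq_zero h0)
      omega
    exact ih (q.takeUntil z hzq).length (hqn ▸ hlt) (q.takeUntil z hzq) rfl hq' hb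
      (alt_takeUntil q hzq haltq) p hp ha haltp hside hzp
  · push_neg at hzz
    set W : G.Walk a b := (p.takeUntil y hy).append q.reverse with hWdef
    have hlenp : (p.takeUntil y hy).edges.length = (p.takeUntil y hy).length := SimpleGraph.Walk.length_edges _
    have hlenq : q.edges.length = q.length := SimpleGraph.Walk.length_edges _
    have hlenW : W.length = (p.takeUntil y hy).length + q.length := by
      rw [hWdef, SimpleGraph.Walk.length_append, SimpleGraph.Walk.length_reverse]
    have hedgesW : W.edges = (p.takeUntil y hy).edges ++ q.edges.reverse := by
      rw [hWdef, SimpleGraph.Walk.edges_append, SimpleGraph.Walk.edges_reverse]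
    -- parity
    have hparp : side y = side a ↔ Even (p.takeUntil y hy).length := side_end side hbip (p.takeUntil y hy)
    have hparq : side y = side b ↔ Even q.length := side_end side hbip q
    have hiff : ¬ (Even (p.takeUntil y hy).length ↔ Even q.length) := by
      intro hEE
      have h1 : (side y = side a) ↔ (side y = side b) := by rw [hparp, hparq]; exact hEE
      apply hside
      revert h1
      cases side y <;> cases side a <;> cases side b <;> simp
    have hoddW : Odd W.length := by
      rw [hlenW, Nat.odd_iff]
      rw [show (¬ (Even (p.takeUntil y hy).length ↔ Even q.length)) ↔
        ¬ ((p.takeUntil y hy).length % 2 = 0 ↔ q.length % 2 = 0) by rw [Nat.even_iff, Nat.even_iff]] at hiff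
      omega
    -- path
    have hWpath : W.IsPath := by
      rw [SimpleGraph.Walk.isPath_def, hWdef, SimpleGraph.Walk.support_append]
      refine List.Nodup.append (hp.takeUntil hy).support_nodup ?_ ?_
      · have : q.reverse.support.Nodup := by
          rw [SimpleGraph.Walk.support_reverse]
          exact List.nodup_reverse.mpr hq.support_nodup
        exact this.tail
      · intro t htp htq
        have htq' : t ∈ q.reverse.support := by
          rw [SimpleGraph.Walk.support_eq_cons q.reverse]
          exact List.mem_cons_of_mem _ htq
        have hty : t ≠ y := by
          intro h
          have hnd : q.reverse.support.Nodup := by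
            rw [SimpleGraph.Walk.support_reverse]
            exact List.nodup_reverse.mpr hq.support_nodup
          rw [SimpleGraph.Walk.support_eq_cons q.reverse] at hnd
          exact (List.nodup_cons.mp hnd).1 (h ▸ htq)
        have htqs : t ∈ q.support := by
          rw [SimpleGraph.Walk.support_reverse, List.mem_reverse] at htq'
          exact htq'
        exact hzz t htqs hty (SimpleGraph.Walk.support_takeUntil_subset p hy htp)
    -- alternation
    have haltW : ∀ i (hi : i < W.edges.length), (W.edges[i] ∈ M.edgeSet ↔ Odd i) := by
      intro i hi
      have hiL : i < (p.takeUntil y hy).length + q.length := by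
        rw [← hlenW, ← SimpleGraph.Walk.length_edges]; exact hi
      by_cases hip : i < (p.takeUntil y hy).length
      · have : W.edges[i] = (p.takeUntil y hy).edges[i]'(by omega) := by
          rw [List.getElem_of_eq hedgesW hi, List.getElem_append_left (by omega)]
        rw [this]
        exact alt_takeUntil p hy haltp i (by omega)
      · push_neg at hip
        have hk : i - (p.takeUntil y hy).length < q.edges.length := by omega
        have : W.edges[i] = q.edges[q.edges.length - 1 - (i - (p.takeUntil y hy).length)]'(by omega) := by
          rw [List.getElem_of_eq hedgesW hi,
            List.getElem_append_right (by omega : (p.takeUntil y hy).edges.length ≤ i),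
            List.getElem_reverse]
          congr 1
          omega
        rw [this, haltq _ (by omega)]
        rw [Nat.odd_iff, Nat.odd_iff]
        rw [hlenW, Nat.odd_iff] at hoddW
        omega
    exact flip_aux hM hmax W hWpath hoddW ha hb haltW
theorem matched_partner_mem {V : Type*} {G : SimpleGraph V} {M : G.Subgraph}
    (hM : M.IsMatching) {a u v : V} (p : G.Walk a u) (ha : a ∉ M.verts)
    (halt : ∀ i (hi : i < p.edges.length), (p.edges[i] ∈ M.edgeSet ↔ Odd i))
    (heven : Even p.length) (hadj : M.Adj u v) : v ∈ p.support := by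
  have hel : p.edges.length = p.length := p.length_edges
  have hu : u ∈ M.verts := M.edge_vert hadj
  have hplen : p.length ≠ 0 := by
    intro h0
    exact ha ((SimpleGraph.Walk.eq_of_length_eq_zero h0) ▸ hu)
  have hodd : Odd (p.length - 1) := by
    rw [Nat.odd_iff]; rw [Nat.even_iff] at heven; omega
  have hlast : M.Adj (p.getVert (p.length - 1)) u := by
    have := (halt (p.length - 1) (by omega)).mpr hodd
    rw [edges_getElem p (p.length - 1) (by omega), show p.length - 1 + 1 = p.length by omega,
      SimpleGraph.Walk.getVert_length] at this
    exact SimpleGraph.Subgraph.mem_edgeSet.mp this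
  have hv : v = p.getVert (p.length - 1) := (hM hu).unique hadj hlast.symm
  rw [hv]
  exact SimpleGraph.Walk.mem_support_iff_exists_getVert.mpr ⟨p.length - 1, rfl, by omega⟩

theorem concat_path_alt {V : Type*} {G : SimpleGraph V} {M : G.Subgraph} {b y w : V}
    (r : G.Walk b y) (hr : r.IsPath) (hw : w ∉ r.support) (h : G.Adj y w)
    (halt : ∀ i (hi : i < r.edges.length), (r.edges[i] ∈ M.edgeSet ↔ Odd i))
    (heven : Even r.length) (hnm : s(y, w) ∉ M.edgeSet) :
    (r.concat h).IsPath ∧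
      ∀ i (hi : i < (r.concat h).edges.length), ((r.concat h).edges[i] ∈ M.edgeSet ↔ Odd i) := by
  have hel : r.edges.length = r.length := r.length_edges
  constructor
  · rw [SimpleGraph.Walk.isPath_def, SimpleGraph.Walk.support_concat]
    refine List.Nodup.append hr.support_nodup (List.nodup_singleton w) ?_
    intro t ht ht2
    rw [List.mem_singleton] at ht2
    exact hw (ht2 ▸ ht)
  · have hEq : (r.concat h).edges = r.edges ++ [s(y, w)] := by
      rw [SimpleGraph.Walk.edges_concat, List.concat_eq_append]
    intro i hi
    rw [hEq, List.length_append, List.length_singleton] at hi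
    rw [List.getElem_of_eq hEq (by rw [hEq, List.length_append, List.length_singleton]; omega)]
    by_cases hir : i < r.edges.length
    · rw [List.getElem_append_left hir]
      exact halt i hir
    · push_neg at hir
      have hieq : i = r.edges.length := by omega
      rw [List.getElem_append_right hir]
      simp only [hieq, Nat.sub_self, List.getElem_singleton]
      constructor
      · intro hc; exact absurd hc hnm
      · intro hc
        exfalso
        rw [hel, Nat.odd_iff] at hc
        rw [Nat.even_iff] at heven
        omega

/-- For a maximum matching `M` of a bipartite graph, there is no edge joining
two even vertices, and no edge joining an even vertex to an unreachable one. -/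
theorem dm_no_even_even_or_even_unreachable_edge
    {V : Type*} [Fintype V] (G : SimpleGraph V)
    (side : V → Bool) (hbip : ∀ u v, G.Adj u v → side u ≠ side v)
    (M : G.Subgraph) (hM : M.IsMatching)
    (hmax : ∀ N : G.Subgraph, N.IsMatching → N.verts.ncard ≤ M.verts.ncard) :
    ∀ u v, G.Adj u v →
      ¬ (EvenVtx G M u ∧ EvenVtx G M v) ∧
      ¬ (EvenVtx G M u ∧ UnreachableVtx G M v) := by
  classical
  intro u v huv
  constructor
  · rintro ⟨⟨a, ha, p, hp, haltp, hevenp⟩, ⟨b, hb, q, hq, haltq, hevenq⟩⟩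
    have haltp' := (altEdges_false_iff M.edgeSet p.edges).mp haltp
    have haltq' := (altEdges_false_iff M.edgeSet q.edges).mp haltq
    have hside : side a ≠ side b := by
      have h1 : side u = side a := (side_end side hbip p).mpr hevenp
      have h2 : side v = side b := (side_end side hbip q).mpr hevenq
      intro h
      exact hbip u v huv (by rw [h1, h2, h])
    by_cases huq : u ∈ q.support
    · exact cross side hbip hM hmax (q.takeUntil u huq).length (q.takeUntil u huq) rfl
        (hq.takeUntil huq) hb (alt_takeUntil q huq haltq') p hp ha haltp' hside
        (SimpleGraph.Walk.end_mem_support p)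
    · have hnm : s(v, u) ∉ M.edgeSet := by
        intro hmem
        have hadj : M.Adj v u := SimpleGraph.Subgraph.mem_edgeSet.mp hmem
        exact huq (matched_partner_mem hM q hb haltq' hevenq hadj)
      obtain ⟨hWpath, hWalt⟩ := concat_path_alt q hq huq huv.symm haltq' hevenq hnm
      exact cross side hbip hM hmax (q.concat huv.symm).length (q.concat huv.symm) rfl
        hWpath hb hWalt p hp ha haltp' hside (SimpleGraph.Walk.end_mem_support p)
  · rintro ⟨⟨a, ha, p, hp, haltp, hevenp⟩, hUv⟩
    have haltp' := (altEdges_false_iff M.edgeSet p.edges).mp haltp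
    by_cases hvp : v ∈ p.support
    · exact hUv a (p.takeUntil v hvp) ha (hp.takeUntil hvp)
        ((altEdges_false_iff M.edgeSet _).mpr (alt_takeUntil p hvp haltp'))
    · have hnm : s(u, v) ∉ M.edgeSet := by
        intro hmem
        exact hvp (matched_partner_mem hM p ha haltp' hevenp
          (SimpleGraph.Subgraph.mem_edgeSet.mp hmem))
      obtain ⟨hWpath, hWalt⟩ := concat_path_alt p hp hvp huv haltp' hevenp hnm
      exact hUv a (p.concat huv) ha hWpath ((altEdges_false_iff M.edgeSet _).mpr hWalt)
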